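/- arXiv:1709.02561 — 4 statements merged into one kernel-verified Lean document; each statement's English description precedes it below -/
import Mathlib

section
/- The rational function V(g,h,e) = (1 + 2eh)/e² is a first integral of the constant-control (u=1) vector field: at every point with e ≠ 0, the Lie derivative of V along f(g,h,e) = (-(he+1)h, (he+1)g, ge²) is zero. -/
/-- The rational function `V(g,h,e) = (1 + 2*e*h)/e²` is a first integral of the
constant-control (`u = 1`) vector field `f(g,h,e) = (-(he+1)h, (he+1)g, ge²)`:
at every point with `e ≠ 0`, the Lie derivative `⟨∇V, f⟩` vanishes. The partial
derivatives of `V` are expressed with `deriv`. -/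
theorem Vcst_first_integral_const_control (g h e : ℝ) (he : e ≠ 0) :
    deriv (fun _ : ℝ => (1 + 2 * e * h) / e ^ 2) g * (-(h * e + 1) * h)
      + deriv (fun x : ℝ => (1 + 2 * e * x) / e ^ 2) h * ((h * e + 1) * g)
      + deriv (fun x : ℝ => (1 + 2 * x * h) / x ^ 2) e * (g * e ^ 2) = 0 := by
  have d1 : deriv (fun _ : ℝ => (1 + 2 * e * h) / e ^ 2) g = 0 := deriv_const _ _
  have d2 : deriv (fun x : ℝ => (1 + 2 * e * x) / e ^ 2) h = 2 * e / e ^ 2 := by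
    have H : HasDerivAt (fun x : ℝ => (1 + 2 * e * x) / e ^ 2) (2 * e / e ^ 2) h := by
      have := (((hasDerivAt_id h).const_mul (2 * e)).const_add 1).div_const (e ^ 2)
      simpa using this
    exact H.deriv
  have d3 : deriv (fun x : ℝ => (1 + 2 * x * h) / x ^ 2) e
      = (2 * h * e ^ 2 - (1 + 2 * e * h) * (2 * e)) / (e ^ 2) ^ 2 := by
    have hnum : HasDerivAt (fun x : ℝ => 1 + 2 * x * h) (2 * h) e := by
      have := (((hasDerivAt_id e).const_mul 2).mul_const h).const_add 1
      simpa [mul_comm] using this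
    have hden : HasDerivAt (fun x : ℝ => x ^ 2) (2 * e) e := by
      simpa [mul_comm] using hasDerivAt_pow 2 e
    have H := hnum.div hden (pow_ne_zero 2 he)
    exact H.deriv
  rw [d1, d2, d3]
  field_simp
  ring
end

section
/- For the proportional-control (u = -h) vector field on ℝ³, the Lie derivative of V(g,h,e) = (1+2eh)/e² at every point with e ≠ 0 equals -2g(h+1)/e; in particular, if e > 0, g > 0, and h ≥ -1, then the Lie derivative of V is nonpositive. -/
/-- For the proportional-control (`u = -h`) vector field
`f(g,h,e) = (-(he-h)h, (he-h)g, ge²)`, the Lie derivative of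
`V(g,h,e) = (1+2eh)/e²` at any point with `e ≠ 0` equals `-2g(h+1)/e`;
in particular if `e > 0`, `g > 0` and `h ≥ -1` the Lie derivative is
nonpositive. -/
theorem Vcst_lie_deriv_prop_control (g h e : ℝ) (he : e ≠ 0) :
    (deriv (fun _ : ℝ => (1 + 2 * e * h) / e ^ 2) g * (-(h * e - h) * h)
        + deriv (fun x : ℝ => (1 + 2 * e * x) / e ^ 2) h * ((h * e - h) * g)
        + deriv (fun x : ℝ => (1 + 2 * x * h) / x ^ 2) e * (g * e ^ 2)
      = -2 * g * (h + 1) / e)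
    ∧ (0 < e → 0 < g → -1 ≤ h →
        deriv (fun _ : ℝ => (1 + 2 * e * h) / e ^ 2) g * (-(h * e - h) * h)
          + deriv (fun x : ℝ => (1 + 2 * e * x) / e ^ 2) h * ((h * e - h) * g)
          + deriv (fun x : ℝ => (1 + 2 * x * h) / x ^ 2) e * (g * e ^ 2) ≤ 0) := by
  have d1 : deriv (fun _ : ℝ => (1 + 2 * e * h) / e ^ 2) g = 0 := deriv_const _ _
  have d2 : deriv (fun x : ℝ => (1 + 2 * e * x) / e ^ 2) h = 2 * e / e ^ 2 := by
    have : HasDerivAt (fun x : ℝ => (1 + 2 * e * x) / e ^ 2) (2 * e / e ^ 2) h := by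
      have h1 : HasDerivAt (fun x : ℝ => 1 + 2 * e * x) (2 * e) h := by
        simpa using ((hasDerivAt_id h).const_mul (2 * e)).const_add 1
      exact h1.div_const _
    exact this.deriv
  have d3 : deriv (fun x : ℝ => (1 + 2 * x * h) / x ^ 2) e
      = (2 * h * e ^ 2 - (1 + 2 * e * h) * (2 * e)) / (e ^ 2) ^ 2 := by
    have hnum : HasDerivAt (fun x : ℝ => 1 + 2 * x * h) (2 * h) e := by
      have := ((hasDerivAt_id e).const_mul 2).mul_const h
      simpa [mul_comm, mul_assoc] using this.const_add 1
    have hden : HasDerivAt (fun x : ℝ => x ^ 2) (2 * e ^ 1) e := by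
      simpa using (hasDerivAt_pow 2 e)
    have : HasDerivAt (fun x : ℝ => (1 + 2 * x * h) / x ^ 2)
        ((2 * h * e ^ 2 - (1 + 2 * e * h) * (2 * e ^ 1)) / (e ^ 2) ^ 2) e :=
      hnum.div hden (pow_ne_zero 2 he)
    rw [this.deriv]
    ring
  have key : deriv (fun _ : ℝ => (1 + 2 * e * h) / e ^ 2) g * (-(h * e - h) * h)
        + deriv (fun x : ℝ => (1 + 2 * e * x) / e ^ 2) h * ((h * e - h) * g)
        + deriv (fun x : ℝ => (1 + 2 * x * h) / x ^ 2) e * (g * e ^ 2)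
      = -2 * g * (h + 1) / e := by
    rw [d1, d2, d3]
    field_simp
    ring
  refine ⟨key, fun he0 hg0 hh => ?_⟩
  rw [key]
  apply div_nonpos_of_nonpos_of_nonneg _ he0.le
  nlinarith
end

section
/- Let (g,h,e,d) : ℝ → ℝ⁴ be a solution on an interval [0,T] of the ODE system ġ = -(he+1)h, ḣ = (he+1)g, ė = ge², ḋ = -g (constant control u=1), with d(t) > 0 and d(t)·e(t) = 1 for all t ∈ [0,T]. Then d(t)² + 2d(t)h(t) = d(0)² + 2d(0)h(0) for all t ∈ [0,T]. In particular, if d(0)² + 2d(0)h(0) ≤ 0 then d(t)² + 2d(t)h(t) ≤ 0 for all t ∈ [0,T]. -/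
/-- Along any solution on `[0,T]` of the constant-control (`u = 1`) system
`ġ = -(he+1)h, ḣ = (he+1)g, ė = ge², ḋ = -g` with `d > 0` and `d*e = 1`
throughout, the quantity `d² + 2dh` is constant; in particular if it is
initially `≤ 0` it stays `≤ 0`. -/
theorem Vcst_constant_along_const_control (T : ℝ) (hT : 0 ≤ T)
    (g h e d : ℝ → ℝ)
    (hg : ∀ t ∈ Set.Icc (0 : ℝ) T, HasDerivAt g (-(h t * e t + 1) * h t) t)
    (hh : ∀ t ∈ Set.Icc (0 : ℝ) T, HasDerivAt h ((h t * e t + 1) * g t) t)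
    (he : ∀ t ∈ Set.Icc (0 : ℝ) T, HasDerivAt e (g t * (e t) ^ 2) t)
    (hd : ∀ t ∈ Set.Icc (0 : ℝ) T, HasDerivAt d (-(g t)) t)
    (hdpos : ∀ t ∈ Set.Icc (0 : ℝ) T, 0 < d t)
    (hde : ∀ t ∈ Set.Icc (0 : ℝ) T, d t * e t = 1) :
    (∀ t ∈ Set.Icc (0 : ℝ) T,
        (d t) ^ 2 + 2 * d t * h t = (d 0) ^ 2 + 2 * d 0 * h 0)
    ∧ ((d 0) ^ 2 + 2 * d 0 * h 0 ≤ 0 →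
        ∀ t ∈ Set.Icc (0 : ℝ) T, (d t) ^ 2 + 2 * d t * h t ≤ 0) := by
  have key : ∀ t ∈ Set.Icc (0 : ℝ) T,
      (d t) ^ 2 + 2 * d t * h t = (d 0) ^ 2 + 2 * d 0 * h 0 := by
    set V : ℝ → ℝ := fun t => (d t) ^ 2 + 2 * d t * h t with hV
    have hderiv : ∀ t ∈ Set.Icc (0 : ℝ) T, HasDerivAt V 0 t := by
      intro t ht
      have H : HasDerivAt V
          (2 * d t * (-(g t)) + (2 * (-(g t)) * h t + 2 * d t * ((h t * e t + 1) * g t))) t := by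
        have h1 := ((hd t ht).pow 2)
        have h2 := ((hd t ht).const_mul 2).mul (hh t ht)
        have this : HasDerivAt (fun x => d x ^ 2 + 2 * d x * h x)
            (↑2 * d t ^ (2 - 1) * -g t + (2 * -g t * h t + 2 * d t * ((h t * e t + 1) * g t))) t :=
          h1.add h2
        convert this using 1
        ring
      have : (2 * d t * (-(g t)) + (2 * (-(g t)) * h t + 2 * d t * ((h t * e t + 1) * g t)))
          = 0 := by
        linear_combination (2 * h t * g t) * (hde t ht)
      rwa [this] at H
    intro t ht
    have := constant_of_has_deriv_right_zero (f := V) (a := 0) (b := T)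
      (fun x hx => (hderiv x hx).continuousAt.continuousWithinAt)
      (fun x hx => ((hderiv x (Set.mem_Icc_of_Ico hx)).hasDerivWithinAt)) t ht
    exact this
  exact ⟨key, fun h0 t ht => (key t ht).le.trans h0⟩
end

section
/- Let (g,h,e,d) : [0,T] → ℝ⁴ be a solution of ġ = -(he-h)h, ḣ = (he-h)g, ė = ge², ḋ = -g (proportional control u = -h) such that for all t ∈ [0,T]: d(t) > 0, g(t)² + h(t)² = 1, and g(t) > √2/2. If d(0)² + 2d(0)h(0) ≤ 0, then d(t)² + 2d(t)h(t) ≤ 0 for all t ∈ [0,T]. -/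
/-- Along any solution on `[0,T]` of the proportional-control (`u = -h`) system
`ġ = -(he-h)h, ḣ = (he-h)g, ė = ge², ḋ = -g` with `d > 0`, `d*e = 1` (by
construction of `e = 1/d`), `g² + h² = 1` and `g > √2/2` throughout, the set
`{d² + 2dh ≤ 0}` is positively invariant: if `d(0)² + 2d(0)h(0) ≤ 0` then
`d(t)² + 2d(t)h(t) ≤ 0` for all `t ∈ [0,T]`. -/
theorem Vcst_invariant_prop_control (T : ℝ) (hT : 0 ≤ T)
    (g h e d : ℝ → ℝ)
    (hg : ∀ t ∈ Set.Icc (0 : ℝ) T, HasDerivAt g (-(h t * e t - h t) * h t) t)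
    (hh : ∀ t ∈ Set.Icc (0 : ℝ) T, HasDerivAt h ((h t * e t - h t) * g t) t)
    (he : ∀ t ∈ Set.Icc (0 : ℝ) T, HasDerivAt e (g t * (e t) ^ 2) t)
    (hd : ∀ t ∈ Set.Icc (0 : ℝ) T, HasDerivAt d (-(g t)) t)
    (hdpos : ∀ t ∈ Set.Icc (0 : ℝ) T, 0 < d t)
    (hde : ∀ t ∈ Set.Icc (0 : ℝ) T, d t * e t = 1)
    (hcirc : ∀ t ∈ Set.Icc (0 : ℝ) T, (g t) ^ 2 + (h t) ^ 2 = 1)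
    (hguard : ∀ t ∈ Set.Icc (0 : ℝ) T, Real.sqrt 2 / 2 < g t)
    (h0 : (d 0) ^ 2 + 2 * d 0 * h 0 ≤ 0) :
    ∀ t ∈ Set.Icc (0 : ℝ) T, (d t) ^ 2 + 2 * d t * h t ≤ 0 := by
  set V : ℝ → ℝ := fun t => (d t) ^ 2 + 2 * d t * h t with hV
  have hVderiv : ∀ t ∈ Set.Icc (0 : ℝ) T,
      HasDerivAt V (-(2 * g t * d t * (h t + 1))) t := by
    intro t ht
    have hv : HasDerivAt V
        (2 * d t * (-(g t)) + (2 * (-(g t)) * h t + 2 * d t * ((h t * e t - h t) * g t))) t := by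
      have h1 : HasDerivAt (fun t => (d t) ^ 2) (2 * d t * (-(g t))) t := by
        have := (hd t ht).pow 2
        exact this.congr_deriv (by ring)
      have h2 : HasDerivAt (fun t => 2 * d t * h t)
          (2 * (-(g t)) * h t + 2 * d t * ((h t * e t - h t) * g t)) t := by
        have := (((hd t ht).const_mul 2).mul (hh t ht))
        exact this.congr_deriv (by ring)
      exact h1.add h2
    have key : 2 * d t * (-(g t)) + (2 * (-(g t)) * h t + 2 * d t * ((h t * e t - h t) * g t))
        = -(2 * g t * d t * (h t + 1)) := by
      have hdet : d t * (h t * e t) = h t := by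
        calc d t * (h t * e t) = h t * (d t * e t) := by ring
          _ = h t := by rw [hde t ht]; ring
      linear_combination (2 * g t) * hdet
    rwa [key] at hv
  suffices hanti : AntitoneOn V (Set.Icc 0 T) by
    intro t ht
    have h0mem : (0 : ℝ) ∈ Set.Icc (0 : ℝ) T := ⟨le_refl 0, hT⟩
    calc V t ≤ V 0 := hanti h0mem ht ht.1
      _ ≤ 0 := h0
  have hconv : Convex ℝ (Set.Icc (0 : ℝ) T) := convex_Icc 0 T
  apply AntitoneOn.mono ?_ (le_refl (Set.Icc 0 T))
  apply antitoneOn_of_deriv_nonpos hconv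
  · exact fun t ht => (hVderiv t ht).continuousAt.continuousWithinAt
  · intro t ht
    exact ((hVderiv t (interior_subset ht)).differentiableAt).differentiableWithinAt
  · intro t ht
    rw [(hVderiv t (interior_subset ht)).deriv]
    have htI := interior_subset ht
    have hg0 : 0 < g t := lt_trans (by positivity) (hguard t htI)
    have hh1 : -1 ≤ h t := by nlinarith [hcirc t htI, sq_nonneg (g t), sq_nonneg (h t + 1)]
    have hd0 := hdpos t htI
    nlinarith [mul_nonneg (mul_nonneg hg0.le hd0.le) (by linarith : (0:ℝ) ≤ h t + 1)]
end
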